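/- Let t_1 = 22 and t_{i+1} = t_i(t_i−1)+1 for i ≥ 1, and let C = Σ_{i=1}^∞ 1/(t_i−1). Let M ≥ 100 be an integer and define u : (0,1/21) → ℝ by u(x) = 1/n for x ∈ [1/(n+1), 1/n) with 21 ≤ n ≤ M−1, and u(x) = M·x/(M−1) for x ∈ (0, 1/M). Then for every finite multiset S of reals in (0,1/21) with Σ_{x∈S} x < 1/21, it holds that Σ_{x∈S} u(x) ≤ C + 1/(M(M−1)). -/

import Mathlib

open scoped BigOperators

noncomputable section

/-- The sequence `t₁ = 22`, `t_{i+1} = t_i(t_i − 1) + 1` (0-indexed: `t 0 = 22`). -/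
def t : ℕ → ℕ
  | 0 => 22
  | n + 1 => t n * (t n - 1) + 1

/-- `C = Σ_{i=1}^∞ 1/(t_i − 1)`. -/
def C : ℝ := ∑' i : ℕ, 1 / ((t i : ℝ) - 1)

/-- `R = 5/3 + C/2 ≈ 1.691561`. -/
def R : ℝ := 5 / 3 + C / 2

/-- The harmonic-tail weight function: `u(x) = 1/n` for `x ∈ [1/(n+1), 1/n)`
with `21 ≤ n ≤ M−1` (here `n = ⌈1/x⌉−1`), and `u(x) = M·x/(M−1)` for
`x ∈ (0, 1/M)`. -/
def u (M : ℕ) (x : ℝ) : ℝ :=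
  if 1 / (M : ℝ) ≤ x then 1 / ((⌈1 / x⌉₊ - 1 : ℕ) : ℝ)
  else (M : ℝ) * x / ((M : ℝ) - 1)

lemma t_ge : ∀ i, 22 ≤ t i := by
  intro i
  induction i with
  | zero => simp [t]
  | succ n ih =>
    show 22 ≤ t n * (t n - 1) + 1
    have : 21 ≤ t n - 1 := by omega
    nlinarith

lemma t_pow : ∀ i, 21 * 2 ^ i ≤ t i - 1 := by
  intro i
  induction i with
  | zero => simp [t]
  | succ n ih =>
    have h2 : 2 ≤ t n := le_trans (by norm_num) (t_ge n)
    show 21 * 2 ^ (n+1) ≤ t n * (t n - 1) + 1 - 1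
    calc 21 * 2 ^ (n+1) = 2 * (21 * 2 ^ n) := by ring
    _ ≤ 2 * (t n - 1) := by omega
    _ ≤ t n * (t n - 1) + 1 - 1 := by
        have := Nat.mul_le_mul_right (t n - 1) h2
        omega

lemma t_cast_sub_one (i : ℕ) : ((t i : ℝ) - 1) = ((t i - 1 : ℕ) : ℝ) := by
  have := t_ge i
  push_cast [Nat.cast_sub (by omega : 1 ≤ t i)]
  ring

lemma t_cast_pos (i : ℕ) : (0:ℝ) < (t i : ℝ) - 1 := by
  rw [t_cast_sub_one]
  have := t_ge i
  exact_mod_cast (by omega : 0 < t i - 1)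

lemma t_succ_cast (i : ℕ) : ((t (i+1) : ℝ)) - 1 = (t i : ℝ) * ((t i : ℝ) - 1) := by
  have h1 : 1 ≤ t i := by have := t_ge i; omega
  show ((t i * (t i - 1) + 1 : ℕ) : ℝ) - 1 = _
  push_cast [Nat.cast_sub h1]
  ring

lemma summable_C : Summable (fun i => 1 / ((t i : ℝ) - 1)) := by
  have hgeo : Summable (fun i : ℕ => (1/21 : ℝ) * (1/2) ^ i) :=
    (summable_geometric_of_lt_one (by norm_num) (by norm_num)).mul_left _
  apply Summable.of_nonneg_of_le (fun i => le_of_lt (by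
    have := t_cast_pos i; positivity)) _ hgeo
  intro i
  have h := t_pow i
  have h' : (21 * 2 ^ i : ℝ) ≤ (t i : ℝ) - 1 := by
    rw [t_cast_sub_one]; exact_mod_cast h
  have h2 : (1:ℝ)/((t i : ℝ) - 1) ≤ 1/(21 * 2^i) :=
    one_div_le_one_div_of_le (by positivity) h'
  have h3 : (1/21 * (1/2)^i : ℝ) = 1/(21 * 2^i) := by
    rw [one_div_pow]; field_simp
  linarith

/-- `AA b` = smallest integer exceeding `1/b`. -/
def AA (b : ℝ) : ℕ := ⌊1/b⌋₊ + 1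

/-- one greedy excess term -/
def hh (b : ℝ) : ℝ := 1 / ((AA b : ℝ) * ((AA b : ℝ) - 1))

/-- greedy expansion sequence of the budget -/
def seq (b : ℝ) : ℕ → ℝ
  | 0 => b
  | i + 1 => seq b i - 1 / (AA (seq b i) : ℝ)

/-- the excess bound function -/
def Hb (b : ℝ) : ℝ := ∑' i, hh (seq b i)

lemma hh_nonneg (b : ℝ) : 0 ≤ hh b := by
  unfold hh
  have h1 : (1:ℝ) ≤ (AA b : ℝ) := by
    unfold AA; exact_mod_cast Nat.le_add_left 1 _
  have : (0:ℝ) ≤ (AA b : ℝ) * ((AA b : ℝ) - 1) := by nlinarith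
  positivity

lemma AA_facts {b : ℝ} (hb : 0 < b) (hb' : b ≤ 1/21) :
    22 ≤ AA b ∧ 1/(AA b : ℝ) < b ∧ b * ((AA b : ℝ) - 1) ≤ 1 := by
  have h21 : (21:ℝ) ≤ 1/b := by
    rw [le_div_iff₀ hb]; linarith
  have hfl : 21 ≤ ⌊1/b⌋₊ := Nat.le_floor h21
  have hA : 22 ≤ AA b := by unfold AA; omega
  have hApos : (0:ℝ) < (AA b : ℝ) := by exact_mod_cast (by omega : 0 < AA b)
  have hlt : 1/b < (AA b : ℝ) := by
    have := Nat.lt_floor_add_one (1/b)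
    unfold AA; push_cast; linarith
  refine ⟨hA, ?_, ?_⟩
  · rw [div_lt_iff₀ hApos]
    rw [div_lt_iff₀ hb] at hlt
    nlinarith
  · have hle : ((⌊1/b⌋₊ : ℝ)) ≤ 1/b := Nat.floor_le (by positivity)
    have h2 : ((AA b : ℝ) - 1) ≤ 1/b := by unfold AA; push_cast; linarith
    calc b * ((AA b : ℝ) - 1) ≤ b * (1/b) := by
          apply mul_le_mul_of_nonneg_left h2 hb.le
    _ = 1 := by field_simp

lemma seq_mem : ∀ {b : ℝ}, 0 < b → b ≤ 1/21 → ∀ i,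
    (0 < seq b i ∧ seq b i ≤ b * (1/22)^i) := by
  intro b hb hb' i
  induction i with
  | zero => exact ⟨hb, by simp [seq]⟩
  | succ n ih =>
    obtain ⟨h0, h1⟩ := ih
    have hle : seq b n ≤ 1/21 := by
      have : b * (1/22)^n ≤ b := by
        nlinarith [pow_le_one₀ (by norm_num : (0:ℝ) ≤ 1/22) (by norm_num : (1:ℝ)/22 ≤ 1) (n := n)]
      linarith
    obtain ⟨hA, hlt, hmul⟩ := AA_facts h0 hle
    have hApos : (0:ℝ) < (AA (seq b n) : ℝ) := by
      exact_mod_cast (by omega : 0 < AA (seq b n))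
    constructor
    · show 0 < seq b n - 1 / (AA (seq b n) : ℝ)
      linarith
    · show seq b n - 1 / (AA (seq b n) : ℝ) ≤ b * (1/22)^(n+1)
      have h21x : (21:ℝ) ≤ 1/(seq b n) := by rw [le_div_iff₀ h0]; linarith
      have hub : (AA (seq b n) : ℝ) ≤ 1/(seq b n) + 1 := by
        have := Nat.floor_le (by positivity : (0:ℝ) ≤ 1/(seq b n))
        unfold AA; push_cast; linarith
      have h22 : (AA (seq b n) : ℝ) ≤ (22/21) * (1/(seq b n)) := by linarith
      have hpos2 : (0:ℝ) < (22/21) * (1/(seq b n)) := by positivity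
      have hinv : 1/((22/21) * (1/(seq b n))) ≤ 1/(AA (seq b n) : ℝ) :=
        one_div_le_one_div_of_le hApos h22
      have heq : 1/((22/21) * (1/(seq b n))) = (21/22) * seq b n := by
        field_simp
      rw [heq] at hinv
      calc seq b n - 1/(AA (seq b n) : ℝ) ≤ seq b n - (21/22) * seq b n := by linarith
      _ = (1/22) * seq b n := by ring
      _ ≤ (1/22) * (b * (1/22)^n) := by linarith
      _ = b * (1/22)^(n+1) := by ring

lemma hh_le {x : ℝ} (hx : 0 < x) (hx' : x ≤ 1/21) : hh x ≤ x := by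
  obtain ⟨hA, hlt, hmul⟩ := AA_facts hx hx'
  have hApos : (0:ℝ) < (AA x : ℝ) := by exact_mod_cast (by omega : 0 < AA x)
  have hA1 : (21:ℝ) ≤ (AA x : ℝ) - 1 := by
    have : (22:ℝ) ≤ (AA x : ℝ) := by exact_mod_cast hA
    linarith
  unfold hh
  rw [div_le_iff₀ (by nlinarith)]
  -- 1 ≤ x * (A * (A-1));  x > 1/A so x * A > 1, and A-1 ≥ 21 ≥ 1
  have h1 : 1 < x * (AA x : ℝ) := by
    rw [div_lt_iff₀ hApos] at hlt; linarith [mul_comm (AA x : ℝ) x]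
  nlinarith

lemma summable_seq {b : ℝ} (hb : 0 < b) (hb' : b ≤ 1/21) :
    Summable (fun i => hh (seq b i)) := by
  have hgeo : Summable (fun i : ℕ => b * (1/22) ^ i) :=
    (summable_geometric_of_lt_one (by norm_num) (by norm_num)).mul_left _
  apply Summable.of_nonneg_of_le (fun i => hh_nonneg _) _ hgeo
  intro i
  obtain ⟨h0, h1⟩ := seq_mem hb hb' i
  have hle : seq b i ≤ 1/21 := by
    have hp : b * (1/22)^i ≤ b := by
      nlinarith [pow_le_one₀ (by norm_num : (0:ℝ) ≤ 1/22) (by norm_num : (1:ℝ)/22 ≤ 1) (n := i)]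
    linarith
  exact le_trans (hh_le h0 hle) h1

lemma Hb_nonneg {b : ℝ} : 0 ≤ Hb b :=
  tsum_nonneg (fun i => hh_nonneg _)

lemma seq_shift (b : ℝ) : ∀ i, seq b (i+1) = seq (b - 1/(AA b : ℝ)) i := by
  intro i
  induction i with
  | zero => rfl
  | succ n ih =>
    show seq b (n+1) - 1/(AA (seq b (n+1)) : ℝ) = _
    rw [ih]; rfl

lemma Hb_step {b : ℝ} (hb : 0 < b) (hb' : b ≤ 1/21) :
    Hb b = hh b + Hb (b - 1/(AA b : ℝ)) := by
  unfold Hb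
  rw [Summable.tsum_eq_zero_add (summable_seq hb hb'),
    tsum_congr (fun i => by rw [seq_shift b i] :
      ∀ i, hh (seq b (i+1)) = hh (seq (b - 1/(AA b : ℝ)) i))]
  rfl

lemma hh_le_Hb {b : ℝ} (hb : 0 < b) (hb' : b ≤ 1/21) : hh b ≤ Hb b := by
  have := Summable.le_tsum (summable_seq hb hb') 0 (fun j _ => hh_nonneg _)
  exact this

/-- the greedy expansion of 1/21 follows the Sylvester sequence -/
lemma seq_sylvester : ∀ i, seq (1/21) i = 1/((t i : ℝ) - 1) := by
  intro i
  induction i with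
  | zero => show (1/21 : ℝ) = 1/((22:ℕ) - 1 : ℝ); norm_num
  | succ n ih =>
    have hT : (22:ℝ) ≤ (t n : ℝ) := by exact_mod_cast t_ge n
    have hpos : (0:ℝ) < (t n : ℝ) - 1 := by linarith
    have hAA : AA (1/((t n : ℝ) - 1)) = t n := by
      unfold AA
      rw [one_div_one_div]
      rw [t_cast_sub_one, Nat.floor_natCast]
      have := t_ge n; omega
    show seq (1/21) n - 1/(AA (seq (1/21) n) : ℝ) = 1/((t (n+1) : ℝ) - 1)
    rw [ih, hAA, t_succ_cast]
    have hTpos : (0:ℝ) < (t n : ℝ) := by linarith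
    field_simp
    ring

lemma hh_sylvester (i : ℕ) :
    hh (seq (1/21) i) = 1/((t i : ℝ) - 1) - 1/(t i : ℝ) := by
  have hT : (22:ℝ) ≤ (t i : ℝ) := by exact_mod_cast t_ge i
  have hpos : (0:ℝ) < (t i : ℝ) - 1 := by linarith
  have hAA : AA (1/((t i : ℝ) - 1)) = t i := by
    unfold AA
    rw [one_div_one_div, t_cast_sub_one, Nat.floor_natCast]
    have := t_ge i; omega
  rw [seq_sylvester i]
  unfold hh
  rw [hAA]
  field_simp
  ring

lemma Hb_eval : Hb (1/21) ≤ C - 1/21 := by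
  unfold Hb
  apply Summable.tsum_le_of_sum_range_le (summable_seq (by norm_num) (by norm_num))
  intro n
  -- partial sum identity: Σ_{i<n} hh_i = Σ_{i<n} 1/(t i − 1) + 1/(t n − 1) − 1/21
  have key : ∀ k, ∑ i ∈ Finset.range k, hh (seq (1/21) i)
      = ∑ i ∈ Finset.range k, (1/((t i : ℝ) - 1)) + 1/((t k : ℝ) - 1) - 1/21 := by
    intro k
    induction k with
    | zero => show (0:ℝ) = 0 + 1/((22:ℕ) - 1 : ℝ) - 1/21; norm_num
    | succ m ih =>
      rw [Finset.sum_range_succ, ih, hh_sylvester m, Finset.sum_range_succ]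
      have hT : (22:ℝ) ≤ (t m : ℝ) := by exact_mod_cast t_ge m
      have h1 : 1/((t m : ℝ) - 1) - 1/(t m : ℝ) = 1/((t (m+1) : ℝ) - 1) := by
        rw [t_succ_cast]
        have : (0:ℝ) < (t m : ℝ) - 1 := by linarith
        field_simp
        ring
      linarith
  rw [key n]
  have h1 : ∑ i ∈ Finset.range n, (1/((t i : ℝ) - 1)) + 1/((t n : ℝ) - 1)
      = ∑ i ∈ Finset.range (n+1), (1/((t i : ℝ) - 1)) := by
    rw [Finset.sum_range_succ]
  have h2 : ∑ i ∈ Finset.range (n+1), (1/((t i : ℝ) - 1)) ≤ C :=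
    Summable.sum_le_tsum _ (fun i _ => by have := t_cast_pos i; positivity) summable_C
  linarith

lemma u_big {M : ℕ} {x : ℝ} (hx : 0 < x) (hx21 : x < 1/21) (hbig : 1/(M:ℝ) ≤ x) :
    u M x = 1/((⌈1/x⌉₊ : ℝ) - 1) ∧ 22 ≤ ⌈1/x⌉₊ ∧ 1/(⌈1/x⌉₊:ℝ) ≤ x := by
  have h21 : (21:ℝ) < 1/x := by
    rw [lt_div_iff₀ hx]; linarith
  have hm : 22 ≤ ⌈1/x⌉₊ := by
    have : (21:ℕ) < ⌈1/x⌉₊ := Nat.lt_ceil.mpr (by exact_mod_cast h21)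
    omega
  have hmpos : (0:ℝ) < (⌈1/x⌉₊ : ℝ) := by exact_mod_cast (by omega : 0 < ⌈1/x⌉₊)
  have hceil : 1/x ≤ (⌈1/x⌉₊ : ℝ) := Nat.le_ceil _
  refine ⟨?_, hm, ?_⟩
  · unfold u
    rw [if_pos hbig, Nat.cast_sub (by omega : 1 ≤ ⌈1/x⌉₊), Nat.cast_one]
  · rw [div_le_iff₀ hmpos]
    rw [div_le_iff₀ hx] at hceil
    nlinarith

lemma sum_map_bound (f : ℝ → ℝ) (c : ℝ) :
    ∀ (S : Multiset ℝ), (∀ x ∈ S, f x ≤ x + x * c) →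
    (S.map f).sum ≤ S.sum + S.sum * c := by
  intro S
  induction S using Multiset.induction with
  | empty => intro _; simp
  | cons a s ih =>
    intro h
    rw [Multiset.map_cons, Multiset.sum_cons, Multiset.sum_cons]
    have ha := h a (Multiset.mem_cons_self a s)
    have hs := ih (fun x hx => h x (Multiset.mem_cons_of_mem hx))
    have : (a + s.sum) * c = a * c + s.sum * c := by ring
    linarith

lemma main_ind (M : ℕ) (hM : 100 ≤ M) : ∀ N : ℕ, ∀ S : Multiset ℝ, S.card ≤ N →
    ∀ b : ℝ, 0 < b → b ≤ 1/21 → (∀ x ∈ S, 0 < x) → S.sum < b →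
    (S.map (u M)).sum ≤ S.sum + Hb b + 1/((M:ℝ) * ((M:ℝ) - 1)) := by
  have hMR : (100:ℝ) ≤ (M:ℝ) := by exact_mod_cast hM
  have hMpos : (0:ℝ) < (M:ℝ) := by linarith
  have hM1pos : (0:ℝ) < (M:ℝ) - 1 := by linarith
  have hprod : (0:ℝ) < (M:ℝ)*((M:ℝ)-1) := mul_pos hMpos hM1pos
  have hprod2 : (0:ℝ) < ((M:ℝ)-1)*((M:ℝ)-1) := mul_pos hM1pos hM1pos
  have hslack : (0:ℝ) ≤ 1/((M:ℝ) * ((M:ℝ) - 1)) :=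
    le_of_lt (one_div_pos.mpr hprod)
  have hkey3 : (1:ℝ)/(((M:ℝ)-1)*((M:ℝ)-1))
      ≤ 1/((M:ℝ)*((M:ℝ)-1)) + 1/((M:ℝ)*((M:ℝ)-1)) := by
    have e2 : (1:ℝ)/((M:ℝ)*((M:ℝ)-1)) + 1/((M:ℝ)*((M:ℝ)-1)) = 2/((M:ℝ)*((M:ℝ)-1)) := by
      ring
    rw [e2, div_le_div_iff₀ hprod2 hprod]
    nlinarith
  intro N
  induction N with
  | zero =>
    intro S hcard b hb hb' hpos hsum
    have hS0 : S = 0 := Multiset.card_eq_zero.mp (le_antisymm hcard (Nat.zero_le _))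
    subst hS0
    simpa using add_nonneg (add_nonneg (le_refl (0:ℝ)) Hb_nonneg) hslack
  | succ n ih =>
    intro S hcard b hb hb' hpos hsum
    have hsumnn : 0 ≤ S.sum := Multiset.sum_nonneg (fun x hx => (hpos x hx).le)
    obtain ⟨hA22, hAlt, hbA⟩ := AA_facts hb hb'
    obtain ⟨a, ha⟩ : ∃ a' : ℝ, (AA b : ℝ) = a' := ⟨_, rfl⟩
    rw [ha] at hAlt hbA
    have haR : (22:ℝ) ≤ a := by rw [← ha]; exact_mod_cast hA22
    have hapos : (0:ℝ) < a := by linarith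
    have ha1pos : (0:ℝ) < a - 1 := by linarith
    have hane : a ≠ 0 := ne_of_gt hapos
    have ha1ne : a - 1 ≠ 0 := ne_of_gt ha1pos
    have hhb : hh b = 1/(a * (a-1)) := by unfold hh; rw [ha]
    have hble : b ≤ 1/(a - 1) := by
      rw [le_div_iff₀ ha1pos]; linarith
    by_cases hex : ∃ x ∈ S, 1/(M:ℝ) ≤ x ∧ ⌈1/x⌉₊ = AA b
    · -- Case 1: remove a largest-class item and recurse at budget b - 1/a
      obtain ⟨x₀, hx₀S, hbig, hceil⟩ := hex
      obtain ⟨S', rfl⟩ := Multiset.exists_cons_of_mem hx₀S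
      rw [Multiset.sum_cons] at hsum hsumnn ⊢
      have hx₀pos : 0 < x₀ := hpos x₀ (Multiset.mem_cons_self _ _)
      have hS'nn : 0 ≤ S'.sum :=
        Multiset.sum_nonneg (fun x hx => (hpos x (Multiset.mem_cons_of_mem hx)).le)
      have hx₀21 : x₀ < 1/21 := by linarith
      obtain ⟨hu, hm22, hinv⟩ := u_big hx₀pos hx₀21 hbig
      rw [hceil, ha] at hu hinv
      have hb'pos : 0 < b - 1/a := by linarith
      have hb'le : b - 1/a ≤ 1/21 := by
        have : 0 < 1/a := one_div_pos.mpr hapos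
        linarith
      have hS'sum : S'.sum < b - 1/a := by linarith
      have hIH := ih S' (by
          have := Multiset.card_cons x₀ S'
          omega) (b - 1/a) hb'pos hb'le
        (fun x hx => hpos x (Multiset.mem_cons_of_mem hx)) hS'sum
      have hustep : u M x₀ ≤ x₀ + hh b := by
        have hid : 1/(a-1) = 1/a + 1/(a*(a-1)) := by
          field_simp
          ring
        rw [hu, hhb, hid]
        linarith
      have hHb := Hb_step hb hb'
      rw [ha] at hHb
      rw [Multiset.map_cons, Multiset.sum_cons]
      have hrec : Hb (b - 1/a) = Hb b - hh b := by rw [hHb]; ring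
      rw [hrec] at hIH
      linarith
    · push_neg at hex
      by_cases hAM : AA b < M
      · -- Case 2: every item has weight ≤ x + x/a
        have hpt : ∀ x ∈ S, u M x ≤ x + x * (1/a) := by
          intro x hx
          have hxpos := hpos x hx
          have hxle : x ≤ S.sum := Multiset.single_le_sum (fun y hy => (hpos y hy).le) x hx
          have hxb : x < b := lt_of_le_of_lt hxle hsum
          have hx21 : x < 1/21 := lt_of_lt_of_le hxb hb'
          by_cases hbigx : 1/(M:ℝ) ≤ x
          · obtain ⟨hu, hm22, hinvm⟩ := u_big hxpos hx21 hbigx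
            have hmA : AA b < ⌈1/x⌉₊ := by
              have h1 : ((⌊1/b⌋₊ : ℝ)) < 1/x := by
                have h2 : ((⌊1/b⌋₊ : ℝ)) ≤ 1/b := Nat.floor_le (by positivity)
                have h3 : 1/b < 1/x := one_div_lt_one_div_of_lt hxpos hxb
                linarith
              have h4 : ⌊1/b⌋₊ < ⌈1/x⌉₊ := Nat.lt_ceil.mpr h1
              have h5 : ⌈1/x⌉₊ ≠ AA b := hex x hx hbigx
              unfold AA at *
              omega
            have hmR : a + 1 ≤ (⌈1/x⌉₊:ℝ) := by
              have h6 : AA b + 1 ≤ ⌈1/x⌉₊ := hmA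
              have h7 : ((AA b : ℝ)) + 1 ≤ (⌈1/x⌉₊:ℝ) := by exact_mod_cast h6
              rw [ha] at h7; exact h7
            have hmpos : (0:ℝ) < (⌈1/x⌉₊:ℝ) := by linarith
            have hm1pos : (0:ℝ) < (⌈1/x⌉₊:ℝ) - 1 := by linarith
            rw [hu]
            have hmne : (⌈1/x⌉₊:ℝ) ≠ 0 := ne_of_gt hmpos
            have hm1ne : (⌈1/x⌉₊:ℝ) - 1 ≠ 0 := ne_of_gt hm1pos
            have e1 : 1/((⌈1/x⌉₊:ℝ)-1)
                = 1/(⌈1/x⌉₊:ℝ) + (1/(⌈1/x⌉₊:ℝ)) * (1/((⌈1/x⌉₊:ℝ)-1)) := by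
              field_simp
              ring
            have e3 : 1/((⌈1/x⌉₊:ℝ)-1) ≤ 1/a :=
              one_div_le_one_div_of_le hapos (by linarith)
            have e4 : (1/(⌈1/x⌉₊:ℝ)) * (1/((⌈1/x⌉₊:ℝ)-1)) ≤ x * (1/a) :=
              mul_le_mul hinvm e3 (le_of_lt (one_div_pos.mpr hm1pos)) hxpos.le
            linarith
          · push_neg at hbigx
            have hu : u M x = (M:ℝ) * x / ((M:ℝ) - 1) := if_neg (not_le.mpr hbigx)
            rw [hu]
            have hMa : a ≤ (M:ℝ) - 1 := by
              have h1 : AA b + 1 ≤ M := by omega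
              have h2 : ((AA b : ℝ)) + 1 ≤ (M:ℝ) := by exact_mod_cast h1
              rw [ha] at h2; linarith
            have hMne : (M:ℝ) - 1 ≠ 0 := ne_of_gt hM1pos
            have hMx : (M:ℝ) * x / ((M:ℝ) - 1) = x + x * (1/((M:ℝ)-1)) := by
              field_simp
              ring
            rw [hMx]
            have : x * (1/((M:ℝ)-1)) ≤ x * (1/a) := by
              apply mul_le_mul_of_nonneg_left _ hxpos.le
              exact one_div_le_one_div_of_le hapos hMa
            linarith
        have hsum2 := sum_map_bound (u M) (1/a) S hpt
        have h5 : S.sum * (1/a) ≤ b * (1/a) :=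
          mul_le_mul_of_nonneg_right hsum.le (le_of_lt (one_div_pos.mpr hapos))
        have h6 : b * (1/a) ≤ hh b := by
          have hhb2 : hh b = (1/(a-1)) * (1/a) := by
            rw [hhb, div_mul_div_comm, one_mul, mul_comm]
          rw [hhb2]
          exact mul_le_mul_of_nonneg_right hble (le_of_lt (one_div_pos.mpr hapos))
        have h7 : hh b ≤ Hb b := hh_le_Hb hb hb'
        linarith
      · -- Case 3: all items are small
        push_neg at hAM
        have hallsmall : ∀ x ∈ S, x < 1/(M:ℝ) := by
          intro x hx
          by_contra hc
          push_neg at hc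
          have hxpos := hpos x hx
          have hxle : x ≤ S.sum := Multiset.single_le_sum (fun y hy => (hpos y hy).le) x hx
          have hxb : x < b := lt_of_le_of_lt hxle hsum
          have hx21 : x < 1/21 := lt_of_lt_of_le hxb hb'
          have hmle : ⌈1/x⌉₊ ≤ M := by
            apply Nat.ceil_le.mpr
            rw [div_le_iff₀ hxpos]
            rw [div_le_iff₀ hMpos] at hc
            nlinarith
          have h1 : ((⌊1/b⌋₊ : ℝ)) < 1/x := by
            have h2 : ((⌊1/b⌋₊ : ℝ)) ≤ 1/b := Nat.floor_le (by positivity)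
            have h3 : 1/b < 1/x := one_div_lt_one_div_of_lt hxpos hxb
            linarith
          have h4 : ⌊1/b⌋₊ < ⌈1/x⌉₊ := Nat.lt_ceil.mpr h1
          have h5 : ⌈1/x⌉₊ ≠ AA b := hex x hx hc
          unfold AA at *
          omega
        have hpt : ∀ x ∈ S, u M x ≤ x + x * (1/((M:ℝ)-1)) := by
          intro x hx
          have hu : u M x = (M:ℝ) * x / ((M:ℝ) - 1) :=
            if_neg (not_le.mpr (hallsmall x hx))
          rw [hu]
          have hMne : (M:ℝ) - 1 ≠ 0 := ne_of_gt hM1pos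
          have : (M:ℝ) * x / ((M:ℝ) - 1) = x + x * (1/((M:ℝ)-1)) := by
            field_simp
            ring
          rw [this]
        have hsum2 := sum_map_bound (u M) (1/((M:ℝ)-1)) S hpt
        have h5 : S.sum * (1/((M:ℝ)-1)) ≤ b * (1/((M:ℝ)-1)) :=
          mul_le_mul_of_nonneg_right hsum.le (le_of_lt (one_div_pos.mpr hM1pos))
        have h6 : b * (1/((M:ℝ)-1)) ≤ (1/(a-1)) * (1/((M:ℝ)-1)) :=
          mul_le_mul_of_nonneg_right hble (le_of_lt (one_div_pos.mpr hM1pos))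
        have haM : (M:ℝ) ≤ a := by rw [← ha]; exact_mod_cast hAM
        have h7 : hh b ≤ Hb b := hh_le_Hb hb hb'
        rcases eq_or_lt_of_le haM with heq | hlt
        · -- a = M : use both hh b and the slack
          have h8 : (1/(a-1)) * (1/((M:ℝ)-1)) ≤ 1/(a*(a-1)) + 1/((M:ℝ)*((M:ℝ)-1)) := by
            rw [← heq, div_mul_div_comm, one_mul]
            exact hkey3
          linarith
        · -- M < a, so M ≤ a - 1 : the slack alone suffices
          have hM1a : (M:ℝ) ≤ a - 1 := by
            have h1 : M + 1 ≤ AA b := by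
              have h2 : (M:ℝ) < (AA b : ℝ) := by rw [ha]; exact hlt
              exact_mod_cast Nat.succ_le_of_lt (by exact_mod_cast h2)
            have h3 : ((M:ℝ)) + 1 ≤ (AA b : ℝ) := by exact_mod_cast h1
            rw [ha] at h3; linarith
          have h8 : (1/(a-1)) * (1/((M:ℝ)-1)) ≤ 1/((M:ℝ)*((M:ℝ)-1)) := by
            rw [div_mul_div_comm, one_mul]
            apply one_div_le_one_div_of_le hprod
            exact mul_le_mul_of_nonneg_right hM1a (le_of_lt hM1pos)
          linarith [Hb_nonneg (b := b)]

/-- any multiset of items of sizes in `(0, 1/21)` with total size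
below `1/21` has total `u`-weight at most `C + 1/(M(M−1))`. -/
theorem stmt9 (M : ℕ) (hM : 100 ≤ M)
    (S : Multiset ℝ) (hS : ∀ x ∈ S, 0 < x ∧ x < 1 / 21)
    (hsum : S.sum < 1 / 21) :
    (S.map (u M)).sum ≤ C + 1 / ((M : ℝ) * ((M : ℝ) - 1)) := by
  have h1 := main_ind M hM S.card S (le_refl _) (1/21) (by norm_num) (le_refl _)
    (fun x hx => (hS x hx).1) hsum
  have h2 : Hb (1/21) ≤ C - 1/21 := Hb_eval
  linarith

end
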